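/- Let $f,g$ be nonnegative, radially symmetric, radially nonincreasing (rearranged) locally integrable functions on $\mathbb{R}^N$, with $g(x)\to 0$ as $|x|\to\infty$. If $\int_{B_R(0)} f\,dx \le \int_{B_R(0)} g\,dx$ for all $R>0$, then for every convex nondecreasing function $\Phi:[0,\infty)\to[0,\infty)$ with $\Phi(0)=0$ one has $\int_{\mathbb{R}^N}\Phi(f(x))\,dx \le \int_{\mathbb{R}^N}\Phi(g(x))\,dx$. -/

import Mathlib

open MeasureTheory Metric
open scoped ENNReal

/-- previous slope -/
noncomputable def cp (c : ℕ → ℝ) : ℕ → ℝ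
  | 0 => 0
  | (k+1) => c k

/-- hinge sum -/
noncomputable def Sh (h : ℝ) (c : ℕ → ℝ) (K : ℕ) (t : ℝ) : ℝ :=
  ∑ k ∈ Finset.range K, (c k - cp c k) * max (t - ((k:ℝ)+1)*h) 0

lemma Sh_eval (Φ : ℝ → ℝ) (h : ℝ) (c : ℕ → ℝ) (hh : 0 < h) (hΦ0 : Φ 0 = 0)
    (hsum : ∀ k : ℕ, c k * h = Φ (((k:ℝ)+1)*h) - Φ ((k:ℝ)*h)) :
    ∀ K : ℕ, ∀ t : ℝ, ((K:ℝ)+1)*h ≤ t →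
      Sh h c K t = Φ ((K:ℝ)*h) + cp c K * (t - ((K:ℝ)+1)*h) := by
  intro K
  induction K with
  | zero => intro t ht; simp [Sh, cp, hΦ0]
  | succ K ih =>
    intro t ht
    have hK1 : ((K:ℝ)+1)*h ≤ t := by
      have : ((K:ℝ)+1)*h ≤ ((K:ℝ)+1+1)*h := by nlinarith
      push_cast at ht ⊢; linarith
    have hmax : max (t - ((K:ℝ)+1)*h) 0 = t - ((K:ℝ)+1)*h := by
      rw [max_eq_left]; linarith
    have := hsum K
    simp only [Sh, Finset.sum_range_succ] at *
    rw [hmax, ih t hK1]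
    simp only [cp]
    push_cast at ht ⊢
    nlinarith [hsum K]

lemma Sh_le (Φ : ℝ → ℝ) (h : ℝ) (c : ℕ → ℝ) (hh : 0 < h) (hΦ0 : Φ 0 = 0)
    (hsum : ∀ k : ℕ, c k * h = Φ (((k:ℝ)+1)*h) - Φ ((k:ℝ)*h))
    (hsupp : ∀ (k:ℕ) (t:ℝ), ((k:ℝ)+1)*h ≤ t → Φ ((k:ℝ)*h) + c k * (t - ((k:ℝ)+1)*h) ≤ Φ t)
    (hΦnn : ∀ t : ℝ, 0 ≤ t → 0 ≤ Φ t) :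
    ∀ K : ℕ, ∀ t : ℝ, 0 ≤ t → Sh h c K t ≤ Φ t := by
  intro K
  induction K with
  | zero => intro t ht; simpa [Sh] using hΦnn t ht
  | succ K ih =>
    intro t ht
    rcases le_or_gt t (((K:ℝ)+1)*h) with hcase | hcase
    · have hmax : max (t - ((K:ℝ)+1)*h) 0 = 0 := by rw [max_eq_right]; linarith
      simp only [Sh, Finset.sum_range_succ] at *
      rw [hmax, mul_zero, add_zero]
      exact ih t ht
    · have heval := Sh_eval Φ h c hh hΦ0 hsum K t hcase.le
      have hmax : max (t - ((K:ℝ)+1)*h) 0 = t - ((K:ℝ)+1)*h := by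
        rw [max_eq_left]; linarith
      have hs := hsupp K t hcase.le
      simp only [Sh, Finset.sum_range_succ] at *
      rw [hmax, heval]
      nlinarith

lemma Sh_ge (Φ : ℝ → ℝ) (h : ℝ) (c : ℕ → ℝ) (hh : 0 < h) (hΦ0 : Φ 0 = 0)
    (hsum : ∀ k : ℕ, c k * h = Φ (((k:ℝ)+1)*h) - Φ ((k:ℝ)*h))
    (hc0 : ∀ k, 0 ≤ c k) (hcm : ∀ k, c k ≤ c (k+1))
    {j K : ℕ} (hjK : j ≤ K) {t : ℝ} (ht : ((j:ℝ)+1)*h ≤ t) :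
    Φ ((j:ℝ)*h) ≤ Sh h c K t := by
  have hd : ∀ k : ℕ, 0 ≤ c k - cp c k := by
    intro k; cases k with
    | zero => simpa [cp] using hc0 0
    | succ k => simpa [cp] using hcm k
  have h1 : Sh h c j t ≤ Sh h c K t := by
    apply Finset.sum_le_sum_of_subset_of_nonneg (Finset.range_subset_range.2 hjK)
    intro k _ _
    exact mul_nonneg (hd k) (le_max_right _ _)
  have h2 := Sh_eval Φ h c hh hΦ0 hsum j t ht
  have hcp : 0 ≤ cp c j := by cases j with
    | zero => simp [cp]
    | succ j => simpa [cp] using hc0 j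
  nlinarith [mul_nonneg hcp (by linarith : (0:ℝ) ≤ t - ((j:ℝ)+1)*h)]

section Inst
variable (Φ : ℝ → ℝ) (hΦc : ConvexOn ℝ (Set.Ici 0) Φ) (hΦm : MonotoneOn Φ (Set.Ici 0))
    (hΦ0 : Φ 0 = 0) (hΦnn : ∀ t ≥ (0:ℝ), 0 ≤ Φ t)

noncomputable def cΦ (h : ℝ) (k : ℕ) : ℝ := (Φ (((k:ℝ)+1)*h) - Φ ((k:ℝ)*h)) / h

noncomputable def Sn (n : ℕ) (t : ℝ) : ℝ :=
  Sh (1/((n:ℝ)+1)) (cΦ Φ (1/((n:ℝ)+1))) ((n+1)*(n+1)) t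

variable {h : ℝ} (hh : 0 < h)

include hh in
lemma kh_mem (k : ℕ) : (k:ℝ)*h ∈ Set.Ici (0:ℝ) :=
  mul_nonneg (Nat.cast_nonneg k) hh.le

include hh in
lemma kh1_mem (k : ℕ) : ((k:ℝ)+1)*h ∈ Set.Ici (0:ℝ) := by
  simp only [Set.mem_Ici]
  have := Nat.cast_nonneg (α:=ℝ) k
  nlinarith

include hh in
lemma kh2_mem (k : ℕ) : ((k:ℝ)+2)*h ∈ Set.Ici (0:ℝ) := by
  simp only [Set.mem_Ici]
  have := Nat.cast_nonneg (α:=ℝ) k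
  nlinarith

include hh in
lemma kh_lt (k : ℕ) : (k:ℝ)*h < ((k:ℝ)+1)*h := by nlinarith

include hh in
lemma cΦ_sum : ∀ k : ℕ, cΦ Φ h k * h = Φ (((k:ℝ)+1)*h) - Φ ((k:ℝ)*h) := by
  intro k; unfold cΦ; exact div_mul_cancel₀ _ hh.ne'

include hh hΦm in
lemma cΦ_nn : ∀ k : ℕ, 0 ≤ cΦ Φ h k := by
  intro k
  apply div_nonneg _ hh.le
  have := hΦm (kh_mem hh k) (kh1_mem hh k) (kh_lt hh k).le
  linarith

include hh hΦc in
lemma cΦ_mono : ∀ k : ℕ, cΦ Φ h k ≤ cΦ Φ h (k+1) := by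
  intro k
  have key := hΦc.slope_mono_adjacent (kh_mem hh k)
    (x := (k:ℝ)*h) (y := ((k:ℝ)+1)*h) (z := ((k:ℝ)+2)*h)
    (kh2_mem hh k) (kh_lt hh k) (by nlinarith)
  have e1 : ((k:ℝ)+1)*h - (k:ℝ)*h = h := by ring
  have e2 : ((k:ℝ)+2)*h - ((k:ℝ)+1)*h = h := by ring
  rw [e1, e2] at key
  simp only [cΦ]
  push_cast
  rw [show ((k:ℝ)+1+1) = (k:ℝ)+2 by ring]
  exact key

include hh hΦc hΦm in
lemma cΦ_supp : ∀ (k:ℕ) (t:ℝ), ((k:ℝ)+1)*h ≤ t →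
    Φ ((k:ℝ)*h) + cΦ Φ h k * (t - ((k:ℝ)+1)*h) ≤ Φ t := by
  intro k t ht
  have hmem1 : ((k:ℝ)+1)*h ∈ Set.Ici (0:ℝ) := kh1_mem hh k
  have hmono := hΦm (kh_mem hh k) hmem1 (kh_lt hh k).le
  rcases eq_or_lt_of_le ht with rfl | hlt
  · simpa using hmono
  · have key := hΦc.slope_mono_adjacent (kh_mem hh k)
      (x := (k:ℝ)*h) (y := ((k:ℝ)+1)*h) (z := t)
      (Set.mem_Ici.2 (le_trans (Set.mem_Ici.1 hmem1) ht)) (kh_lt hh k) hlt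
    have e1 : ((k:ℝ)+1)*h - (k:ℝ)*h = h := by ring
    rw [e1] at key
    have hpos : 0 < t - ((k:ℝ)+1)*h := by linarith
    have : cΦ Φ h k * (t - ((k:ℝ)+1)*h) ≤ Φ t - Φ (((k:ℝ)+1)*h) := by
      rw [show cΦ Φ h k = (Φ (((k:ℝ)+1)*h) - Φ ((k:ℝ)*h)) / h from rfl]
      calc (Φ (((k:ℝ)+1)*h) - Φ ((k:ℝ)*h)) / h * (t - ((k:ℝ)+1)*h)
          ≤ (Φ t - Φ (((k:ℝ)+1)*h)) / (t - ((k:ℝ)+1)*h) * (t - ((k:ℝ)+1)*h) := by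
            exact mul_le_mul_of_nonneg_right key hpos.le
        _ = Φ t - Φ (((k:ℝ)+1)*h) := by field_simp
    linarith

include hΦc hΦm hΦ0 hΦnn in
lemma Sn_le : ∀ n : ℕ, ∀ t : ℝ, 0 ≤ t → Sn Φ n t ≤ Φ t := by
  intro n t ht
  have hh : (0:ℝ) < 1/((n:ℝ)+1) := by positivity
  exact Sh_le Φ _ _ hh hΦ0 (cΦ_sum Φ hh) (cΦ_supp Φ hΦc hΦm hh)
    (fun t ht => hΦnn t ht) _ t ht

include hΦc hΦm hΦ0 in
lemma Sn_tendsto : ∀ t : ℝ, 0 ≤ t →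
    Filter.Tendsto (fun n => Sn Φ n t) Filter.atTop (nhds (Φ t)) := by
  intro t ht
  rcases eq_or_lt_of_le ht with rfl | htpos
  · have hzero : ∀ n, Sn Φ n 0 = 0 := by
      intro n
      unfold Sn Sh
      apply Finset.sum_eq_zero
      intro k _
      have hn : (0:ℝ) < 1/((n:ℝ)+1) := by positivity
      have : max (0 - ((k:ℝ)+1)*(1/((n:ℝ)+1))) 0 = 0 := by
        rw [max_eq_right]
        nlinarith [Nat.cast_nonneg (α:=ℝ) k]
      rw [this, mul_zero]
    rw [hΦ0]
    simpa [hzero] using (tendsto_const_nhds :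
      Filter.Tendsto (fun _ : ℕ => (0:ℝ)) Filter.atTop (nhds 0))
  · set C := Φ (t+1) - Φ t with hC
    have ht1 : t + 1 ∈ Set.Ici (0:ℝ) := by simp only [Set.mem_Ici]; linarith
    have hCnn : 0 ≤ C := sub_nonneg.2 (hΦm (Set.mem_Ici.2 ht) ht1 (by linarith))
    have hlow : ∀ᶠ n : ℕ in Filter.atTop, Φ t - 2*(1/((n:ℝ)+1))*C ≤ Sn Φ n t := by
      filter_upwards [Filter.eventually_ge_atTop ⌈2/t⌉₊,
        Filter.eventually_ge_atTop ⌈t⌉₊] with n h1 h2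
      set h : ℝ := 1/((n:ℝ)+1) with hdef
      have hh : 0 < h := by positivity
      have hn2 : 2/t ≤ (n:ℝ)+1 := by
        have ha := Nat.le_ceil (2/t)
        have hb : ((⌈2/t⌉₊:ℕ):ℝ) ≤ (n:ℝ) := Nat.cast_le.2 h1
        linarith
      have hnt : t ≤ (n:ℝ)+1 := by
        have ha := Nat.le_ceil t
        have hb : ((⌈t⌉₊:ℕ):ℝ) ≤ (n:ℝ) := Nat.cast_le.2 h2
        linarith
      have hth : t / h = t * ((n:ℝ)+1) := by rw [hdef]; field_simp
      have ht2 : (2:ℝ) ≤ t * ((n:ℝ)+1) := by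
        rw [div_le_iff₀ htpos] at hn2; linarith
      set m : ℕ := ⌊t * ((n:ℝ)+1)⌋₊ with hm
      have hm2 : 2 ≤ m := Nat.le_floor (by exact_mod_cast ht2)
      set j : ℕ := m - 1 with hj
      have hjc : (j:ℝ) = (m:ℝ) - 1 := by
        rw [hj, Nat.cast_sub (le_trans one_le_two hm2)]; norm_num
      have hfloor_le : (m:ℝ) ≤ t * ((n:ℝ)+1) := Nat.floor_le (by positivity)
      have hfloor_gt : t * ((n:ℝ)+1) < (m:ℝ) + 1 := Nat.lt_floor_add_one _
      have hjt : ((j:ℝ)+1)*h ≤ t := by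
        rw [hjc]
        have : ((m:ℝ) - 1 + 1) = (m:ℝ) := by ring
        rw [this]
        calc (m:ℝ) * h ≤ (t * ((n:ℝ)+1)) * h := by nlinarith
          _ = t := by rw [hdef]; field_simp
      have hjK : j ≤ (n+1)*(n+1) := by
        have h1' : (t * ((n:ℝ)+1)) ≤ (((n+1)*(n+1) : ℕ) : ℝ) := by
          push_cast; nlinarith
        have := Nat.floor_le_floor h1'
        rw [Nat.floor_natCast] at this
        omega
      have hjh_lt : (j:ℝ)*h < t := by nlinarith
      have hδ : t - (j:ℝ)*h ≤ 2*h := by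
        rw [hjc]
        have : t < ((m:ℝ)+1) * h := by
          calc t = (t * ((n:ℝ)+1)) * h := by rw [hdef]; field_simp
            _ < ((m:ℝ)+1) * h := by nlinarith
        nlinarith
      have hkey := hΦc.slope_mono_adjacent (kh_mem hh j) ht1 hjh_lt (by linarith)
      have hd1 : t + 1 - t = 1 := by ring
      rw [hd1, div_one] at hkey
      have hδpos : 0 < t - (j:ℝ)*h := by linarith
      have hup : Φ t - Φ ((j:ℝ)*h) ≤ (t - (j:ℝ)*h) * C := by
        rw [div_le_iff₀ hδpos] at hkey
        rw [hC]
        linarith [mul_comm (Φ (t+1) - Φ t) (t - (j:ℝ)*h), hkey]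
      have hSn : Φ ((j:ℝ)*h) ≤ Sn Φ n t := by
        unfold Sn
        rw [← hdef]
        exact Sh_ge Φ h (cΦ Φ h) hh hΦ0 (cΦ_sum Φ hh) (cΦ_nn Φ hΦm hh)
          (cΦ_mono Φ hΦc hh) hjK hjt
      have : Φ t - Φ ((j:ℝ)*h) ≤ 2*h*C :=
        le_trans hup (mul_le_mul_of_nonneg_right hδ hCnn)
      linarith
    have hup : ∀ᶠ n in Filter.atTop, Sn Φ n t ≤ Φ t := by
      apply Filter.Eventually.of_forall
      intro n
      have hh : (0:ℝ) < 1/((n:ℝ)+1) := by positivity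
      exact Sh_le Φ _ _ hh hΦ0 (cΦ_sum Φ hh) (cΦ_supp Φ hΦc hΦm hh)
        (fun u hu => by
          have := hΦm (Set.mem_Ici.2 le_rfl) (Set.mem_Ici.2 hu) hu
          rw [hΦ0] at this; exact this) _ t ht
    have hlim : Filter.Tendsto (fun n : ℕ => Φ t - 2*(1/((n:ℝ)+1))*C)
        Filter.atTop (nhds (Φ t)) := by
      have h0 : Filter.Tendsto (fun n : ℕ => 1/((n:ℝ)+1)) Filter.atTop (nhds 0) :=
        tendsto_one_div_add_atTop_nhds_zero_nat
      have h1 : Filter.Tendsto (fun n : ℕ => 2*(1/((n:ℝ)+1))*C) Filter.atTop (nhds 0) := by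
        have := (h0.const_mul 2).mul_const C
        simpa using this
      have h2 : Filter.Tendsto (fun n : ℕ => Φ t - 2*(1/((n:ℝ)+1))*C) Filter.atTop
          (nhds (Φ t - 0)) := Filter.Tendsto.sub tendsto_const_nhds h1
      simpa using h2
    exact tendsto_of_tendsto_of_tendsto_of_le_of_le' hlim tendsto_const_nhds hlow hup

end Inst

section Key

variable {E : Type*} [NormedAddCommGroup E] [NormedSpace ℝ E] [MeasurableSpace E]
  [BorelSpace E] [FiniteDimensional ℝ E] [Nontrivial E]
  (μ : Measure E) [μ.IsAddHaarMeasure]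

lemma key_lemma (f g : E → ℝ)
    (hf0 : ∀ x, 0 ≤ f x) (hg0 : ∀ x, 0 ≤ g x)
    (hfr : ∀ x y : E, ‖x‖ ≤ ‖y‖ → f y ≤ f x)
    (hfl : LocallyIntegrable f μ) (hgl : LocallyIntegrable g μ)
    (hconc : ∀ R > (0:ℝ), ∫ x in ball (0:E) R, f x ∂μ ≤ ∫ x in ball (0:E) R, g x ∂μ)
    (s : ℝ) (hs : 0 ≤ s) :
    ∫⁻ x, ENNReal.ofReal (f x - s) ∂μ ≤ ∫⁻ x, ENNReal.ofReal (g x - s) ∂μ := by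
  have hfm : AEMeasurable f μ := hfl.aestronglyMeasurable.aemeasurable
  set F : E → ℝ≥0∞ := fun x => ENNReal.ofReal (f x - s) with hF
  have hFm : AEMeasurable F μ :=
    ENNReal.measurable_ofReal.comp_aemeasurable (hfm.sub aemeasurable_const)
  -- Step A : write the integral as a sup over balls
  have hstep : ∫⁻ x, F x ∂μ = ⨆ n : ℕ, ∫⁻ x in ball (0:E) ((n:ℝ)+1), F x ∂μ := by
    have h1 : ∀ x, F x = ⨆ n : ℕ, (ball (0:E) ((n:ℝ)+1)).indicator F x := by
      intro x
      refine le_antisymm ?_ (iSup_le fun n => Set.indicator_le_self _ _ x)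
      have hx : x ∈ ball (0:E) ((⌊‖x‖⌋₊:ℝ)+1) := by
        rw [mem_ball_zero_iff]
        exact Nat.lt_floor_add_one ‖x‖
      have h2 : (ball (0:E) ((⌊‖x‖⌋₊:ℝ)+1)).indicator F x = F x := Set.indicator_of_mem hx F
      rw [← h2]
      exact le_iSup (fun n : ℕ => (ball (0:E) ((n:ℝ)+1)).indicator F x) ⌊‖x‖⌋₊
    calc ∫⁻ x, F x ∂μ = ∫⁻ x, ⨆ n : ℕ, (ball (0:E) ((n:ℝ)+1)).indicator F x ∂μ :=
          lintegral_congr h1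
      _ = ⨆ n : ℕ, ∫⁻ x, (ball (0:E) ((n:ℝ)+1)).indicator F x ∂μ := by
          apply lintegral_iSup' (fun n => hFm.indicator measurableSet_ball)
          apply Filter.Eventually.of_forall
          intro x n m hnm
          apply Set.indicator_le_indicator_of_subset
          · apply ball_subset_ball
            have : (n:ℝ) ≤ (m:ℝ) := Nat.cast_le.2 hnm
            linarith
          · intro y; exact zero_le
      _ = ⨆ n : ℕ, ∫⁻ x in ball (0:E) ((n:ℝ)+1), F x ∂μ := by
          congr 1; funext n; exact lintegral_indicator measurableSet_ball F
  rw [hstep]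
  apply iSup_le
  intro n
  set R : ℝ := (n:ℝ)+1 with hR
  have hRpos : 0 < R := by positivity
  -- the critical radius
  set Sset : Set ℝ := {r : ℝ | r ∈ Set.Icc 0 R ∧ ∀ x : E, ‖x‖ < r → s < f x} with hSset
  have h0S : (0:ℝ) ∈ Sset := by
    constructor
    · exact ⟨le_rfl, hRpos.le⟩
    · intro x hx; exact absurd hx (not_lt.2 (norm_nonneg x))
  have hbdd : BddAbove Sset := ⟨R, fun r hr => hr.1.2⟩
  set r0 : ℝ := sSup Sset with hr0
  have hr00 : 0 ≤ r0 := le_csSup hbdd h0S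
  have hr0R : r0 ≤ R := csSup_le ⟨0, h0S⟩ (fun r hr => hr.1.2)
  have hin : ∀ x : E, ‖x‖ < r0 → s < f x := by
    intro x hx
    obtain ⟨r, hrS, hr⟩ := exists_lt_of_lt_csSup ⟨0, h0S⟩ hx
    exact hrS.2 x hr
  have hout : ∀ x : E, r0 < ‖x‖ → ‖x‖ ≤ R → f x ≤ s := by
    intro x hx hxR
    by_contra hcon
    push_neg at hcon
    have hxS : ‖x‖ ∈ Sset :=
      ⟨⟨norm_nonneg x, hxR⟩, fun y hy => lt_of_lt_of_le hcon (hfr y x hy.le)⟩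
    exact absurd (le_csSup hbdd hxS) (not_le.2 hx)
  -- replace the ball of radius R by the ball of radius r0
  have hsph : μ (sphere (0:E) r0) = 0 := Measure.addHaar_sphere μ 0 r0
  have hcong : ∫⁻ x in ball (0:E) R, F x ∂μ = ∫⁻ x in ball (0:E) r0, F x ∂μ := by
    have h2 : ∀ᵐ x : E ∂μ, x ∉ sphere (0:E) r0 := by
      rw [ae_iff]
      have : {a : E | ¬a ∉ sphere (0:E) r0} = sphere (0:E) r0 := by
        ext a; simp
      rw [this]
      exact hsph
    have hae : ∀ᵐ x : E ∂(μ.restrict (ball (0:E) R)),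
        F x = (ball (0:E) r0).indicator F x := by
      filter_upwards [ae_restrict_mem measurableSet_ball, ae_restrict_of_ae h2] with x hxR hxs
      have hne : ‖x‖ ≠ r0 := by
        intro hcon; exact hxs (by simpa [mem_sphere_zero_iff_norm] using hcon)
      rcases lt_or_gt_of_ne hne with hlt | hgt
      · rw [Set.indicator_of_mem (mem_ball_zero_iff.2 hlt)]
      · rw [Set.indicator_of_notMem (by simpa [mem_ball_zero_iff] using not_lt.2 hgt.le)]
        have : f x ≤ s := hout x hgt (mem_ball_zero_iff.1 hxR).le
        simp only [hF, ENNReal.ofReal_eq_zero]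
        linarith
    calc ∫⁻ x in ball (0:E) R, F x ∂μ
        = ∫⁻ x in ball (0:E) R, (ball (0:E) r0).indicator F x ∂μ := lintegral_congr_ae hae
      _ = ∫⁻ x in ball (0:E) r0, F x ∂(μ.restrict (ball (0:E) R)) :=
          lintegral_indicator measurableSet_ball F
      _ = ∫⁻ x in ball (0:E) r0 ∩ ball (0:E) R, F x ∂μ := by
          rw [Measure.restrict_restrict measurableSet_ball]
      _ = ∫⁻ x in ball (0:E) r0, F x ∂μ := by
          rw [Set.inter_eq_self_of_subset_left (ball_subset_ball hr0R)]
  rw [hcong]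
  -- now bound the integral over the ball of radius r0
  rcases eq_or_lt_of_le hr00 with hr0z | hr0pos
  · rw [← hr0z, ball_zero]
    simp
  set B : Set E := ball (0:E) r0 with hB
  set V : ℝ≥0∞ := μ B with hV
  have hVfin : ENNReal.ofReal s * V ≠ ⊤ :=
    ENNReal.mul_ne_top ENNReal.ofReal_ne_top measure_ball_lt_top.ne
  have hEf : ∫⁻ x in B, F x ∂μ + ENNReal.ofReal s * V = ∫⁻ x in B, ENNReal.ofReal (f x) ∂μ := by
    have h1 : ∫⁻ x in B, F x ∂μ + ENNReal.ofReal s * V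
        = ∫⁻ x in B, (F x + ENNReal.ofReal s) ∂μ := by
      rw [lintegral_add_right _ measurable_const, setLIntegral_const, mul_comm]
    rw [h1]
    apply setLIntegral_congr_fun measurableSet_ball
    intro x hx
    have hfx : s ≤ f x := (hin x (mem_ball_zero_iff.1 hx)).le
    rw [hF]
    simp only
    rw [← ENNReal.ofReal_add (by linarith) hs]
    ring_nf
  have hEg : ∫⁻ x in B, ENNReal.ofReal (g x) ∂μ
      ≤ ∫⁻ x in B, ENNReal.ofReal (g x - s) ∂μ + ENNReal.ofReal s * V := by
    have h1 : ∫⁻ x in B, ENNReal.ofReal (g x - s) ∂μ + ENNReal.ofReal s * V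
        = ∫⁻ x in B, (ENNReal.ofReal (g x - s) + ENNReal.ofReal s) ∂μ := by
      rw [lintegral_add_right _ measurable_const, setLIntegral_const, mul_comm]
    rw [h1]
    apply lintegral_mono
    intro x
    calc ENNReal.ofReal (g x) = ENNReal.ofReal ((g x - s) + s) := by ring_nf
      _ ≤ ENNReal.ofReal (g x - s) + ENNReal.ofReal s := ENNReal.ofReal_add_le
  have hfi : IntegrableOn f B μ :=
    (hfl.integrableOn_isCompact (isCompact_closedBall (0:E) r0)).mono_set
      ball_subset_closedBall
  have hgi : IntegrableOn g B μ :=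
    (hgl.integrableOn_isCompact (isCompact_closedBall (0:E) r0)).mono_set
      ball_subset_closedBall
  have hconc' : ∫⁻ x in B, ENNReal.ofReal (f x) ∂μ ≤ ∫⁻ x in B, ENNReal.ofReal (g x) ∂μ := by
    rw [← ofReal_integral_eq_lintegral_ofReal hfi (Filter.Eventually.of_forall hf0),
      ← ofReal_integral_eq_lintegral_ofReal hgi (Filter.Eventually.of_forall hg0)]
    exact ENNReal.ofReal_le_ofReal (hconc r0 hr0pos)
  have htail : ∫⁻ x in B, ENNReal.ofReal (g x - s) ∂μ ≤ ∫⁻ x, ENNReal.ofReal (g x - s) ∂μ :=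
    setLIntegral_le_lintegral _ _
  have hchain : ∫⁻ x in B, F x ∂μ + ENNReal.ofReal s * V
      ≤ (∫⁻ x, ENNReal.ofReal (g x - s) ∂μ) + ENNReal.ofReal s * V := by
    rw [hEf]
    exact le_trans hconc' (le_trans hEg (add_le_add_left htail _))
  exact (ENNReal.add_le_add_iff_right hVfin).1 hchain

end Key

lemma ofReal_max_zero (u : ℝ) : ENNReal.ofReal (max u 0) = ENNReal.ofReal u := by
  rcases le_or_gt u 0 with h | h
  · rw [max_eq_right h, ENNReal.ofReal_zero, eq_comm, ENNReal.ofReal_eq_zero]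
    exact h
  · rw [max_eq_left h.le]

/-- Comparison of concentrations implies comparison of integrals of convex
nondecreasing functions of rearranged functions. -/
theorem stmt1 (N : ℕ) (hN : 1 ≤ N)
    (f g : EuclideanSpace ℝ (Fin N) → ℝ)
    (hf0 : ∀ x, 0 ≤ f x) (hg0 : ∀ x, 0 ≤ g x)
    (hfr : ∀ x y : EuclideanSpace ℝ (Fin N), ‖x‖ ≤ ‖y‖ → f y ≤ f x)
    (hgr : ∀ x y : EuclideanSpace ℝ (Fin N), ‖x‖ ≤ ‖y‖ → g y ≤ g x)
    (hfl : LocallyIntegrable f volume) (hgl : LocallyIntegrable g volume)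
    (hgz : Filter.Tendsto g (Bornology.cobounded _) (nhds 0))
    (hconc : ∀ R > (0:ℝ),
      ∫ x in ball (0 : EuclideanSpace ℝ (Fin N)) R, f x ≤
        ∫ x in ball (0 : EuclideanSpace ℝ (Fin N)) R, g x)
    (Φ : ℝ → ℝ) (hΦc : ConvexOn ℝ (Set.Ici 0) Φ) (hΦm : MonotoneOn Φ (Set.Ici 0))
    (hΦ0 : Φ 0 = 0) (hΦnn : ∀ t ≥ (0:ℝ), 0 ≤ Φ t) :
    ∫⁻ x, ENNReal.ofReal (Φ (f x)) ≤ ∫⁻ x, ENNReal.ofReal (Φ (g x)) := by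
  haveI : Nonempty (Fin N) := ⟨⟨0, hN⟩⟩
  haveI : Nontrivial (EuclideanSpace ℝ (Fin N)) := inferInstance
  have hfm : AEMeasurable f volume := hfl.aestronglyMeasurable.aemeasurable
  have hgm : AEMeasurable g volume := hgl.aestronglyMeasurable.aemeasurable
  -- hinge comparison
  have hkey : ∀ s : ℝ, 0 ≤ s →
      ∫⁻ x, ENNReal.ofReal (f x - s) ≤ ∫⁻ x, ENNReal.ofReal (g x - s) :=
    fun s hs => key_lemma volume f g hf0 hg0 hfr hfl hgl hconc s hs
  -- comparison for each approximation
  have hSn_int : ∀ n : ℕ,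
      ∫⁻ x, ENNReal.ofReal (Sn Φ n (f x)) ≤ ∫⁻ x, ENNReal.ofReal (Φ (g x)) := by
    intro n
    have hh : (0:ℝ) < 1/((n:ℝ)+1) := by positivity
    set h : ℝ := 1/((n:ℝ)+1) with hdef
    set c : ℕ → ℝ := cΦ Φ h with hc
    set K : ℕ := (n+1)*(n+1) with hK
    have hd : ∀ k : ℕ, 0 ≤ c k - cp c k := by
      intro k; cases k with
      | zero => simpa [cp] using cΦ_nn Φ hΦm hh 0
      | succ k =>
        have h1 := cΦ_mono Φ hΦc hh k
        simpa [cp, hc] using h1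
    have hexp : ∀ (q : EuclideanSpace ℝ (Fin N) → ℝ),
        (fun x => ENNReal.ofReal (Sn Φ n (q x))) = fun x =>
          ∑ k ∈ Finset.range K, ENNReal.ofReal (c k - cp c k) *
            ENNReal.ofReal (q x - ((k:ℝ)+1)*h) := by
      intro q
      funext x
      have h1 : Sn Φ n (q x) = ∑ k ∈ Finset.range K,
          (c k - cp c k) * max (q x - ((k:ℝ)+1)*h) 0 := rfl
      rw [h1, ENNReal.ofReal_sum_of_nonneg
        (fun k _ => mul_nonneg (hd k) (le_max_right _ _))]
      refine Finset.sum_congr rfl (fun k _ => ?_)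
      rw [ENNReal.ofReal_mul (hd k), ofReal_max_zero]
    have hterm : ∀ (q : EuclideanSpace ℝ (Fin N) → ℝ), AEMeasurable q volume →
        ∫⁻ x, ENNReal.ofReal (Sn Φ n (q x)) = ∑ k ∈ Finset.range K,
          ENNReal.ofReal (c k - cp c k) * ∫⁻ x, ENNReal.ofReal (q x - ((k:ℝ)+1)*h) := by
      intro q hq
      rw [hexp q]
      have hm : ∀ k ∈ Finset.range K, AEMeasurable (fun x => ENNReal.ofReal (c k - cp c k) *
          ENNReal.ofReal (q x - ((k:ℝ)+1)*h)) volume := by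
        intro k _
        exact (ENNReal.measurable_ofReal.comp_aemeasurable
          (hq.sub aemeasurable_const)).const_mul _
      rw [lintegral_finset_sum' _ hm]
      refine Finset.sum_congr rfl (fun k _ => ?_)
      exact lintegral_const_mul'' _ (ENNReal.measurable_ofReal.comp_aemeasurable
        (hq.sub aemeasurable_const))
    calc ∫⁻ x, ENNReal.ofReal (Sn Φ n (f x))
        = ∑ k ∈ Finset.range K, ENNReal.ofReal (c k - cp c k) *
            ∫⁻ x, ENNReal.ofReal (f x - ((k:ℝ)+1)*h) := hterm f hfm
      _ ≤ ∑ k ∈ Finset.range K, ENNReal.ofReal (c k - cp c k) *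
            ∫⁻ x, ENNReal.ofReal (g x - ((k:ℝ)+1)*h) := by
          refine Finset.sum_le_sum (fun k _ => ?_)
          refine mul_le_mul_right (hkey (((k:ℝ)+1)*h) ?_) _
          have : (0:ℝ) ≤ (k:ℝ) := Nat.cast_nonneg k
          nlinarith
      _ = ∫⁻ x, ENNReal.ofReal (Sn Φ n (g x)) := (hterm g hgm).symm
      _ ≤ ∫⁻ x, ENNReal.ofReal (Φ (g x)) := by
          apply lintegral_mono
          intro x
          exact ENNReal.ofReal_le_ofReal (Sn_le Φ hΦc hΦm hΦ0 hΦnn n (g x) (hg0 x))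
  -- Fatou
  have hptf : ∀ x, Filter.Tendsto (fun n => ENNReal.ofReal (Sn Φ n (f x)))
      Filter.atTop (nhds (ENNReal.ofReal (Φ (f x)))) :=
    fun x => (ENNReal.continuous_ofReal.tendsto _).comp
      (Sn_tendsto Φ hΦc hΦm hΦ0 (f x) (hf0 x))
  have hmeas : ∀ n : ℕ, AEMeasurable (fun x => ENNReal.ofReal (Sn Φ n (f x))) volume := by
    intro n
    have hh : (0:ℝ) < 1/((n:ℝ)+1) := by positivity
    have h1 : (fun x => Sn Φ n (f x)) = fun x =>
        ∑ k ∈ Finset.range ((n+1)*(n+1)), (cΦ Φ (1/((n:ℝ)+1)) k - cp (cΦ Φ (1/((n:ℝ)+1))) k) *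
          max (f x - ((k:ℝ)+1)*(1/((n:ℝ)+1))) 0 := rfl
    apply ENNReal.measurable_ofReal.comp_aemeasurable
    rw [h1]
    apply Finset.aemeasurable_fun_sum
    intro k _
    exact ((hfm.sub aemeasurable_const).max aemeasurable_const).const_mul _
  calc ∫⁻ x, ENNReal.ofReal (Φ (f x))
      = ∫⁻ x, Filter.liminf (fun n => ENNReal.ofReal (Sn Φ n (f x))) Filter.atTop :=
        lintegral_congr (fun x => ((hptf x).liminf_eq).symm)
    _ ≤ Filter.liminf (fun n => ∫⁻ x, ENNReal.ofReal (Sn Φ n (f x))) Filter.atTop :=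
        lintegral_liminf_le' hmeas
    _ ≤ Filter.liminf (fun _ : ℕ => ∫⁻ x, ENNReal.ofReal (Φ (g x))) Filter.atTop :=
        Filter.liminf_le_liminf (Filter.Eventually.of_forall hSn_int)
    _ = ∫⁻ x, ENNReal.ofReal (Φ (g x)) := Filter.liminf_const _
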